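/- Let V be a real vector space of dimension 2n+1, α a linear functional and ω an alternating bilinear form on V with α ∧ ω^n ≠ 0, and let R be the unique vector with α(R)=1 and ι_R ω = 0. Then for every real number h and every linear functional β on V there exists a unique vector v ∈ V satisfying α(v) = h and ω(v, ·) = β(R)·α − β. -/
import Mathlib


/-- Let `V` be a real vector space of dimension `2n+1`, `α` a linear
functional and `ω` an alternating bilinear form on `V` with `α ∧ ωⁿ ≠ 0` (i.e. `α ≠ 0`
and `ω` is nondegenerate on `ker α`), and let `R` be the unique vector with `α R = 1` and
`ι_R ω = 0`.  Then for every `h : ℝ` and every linear functional `β` on `V` there is a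
unique vector `v` with `α v = h` and `ω v · = β(R)·α − β`. -/
theorem contact_hamiltonian_vector_exists_unique (n : ℕ) (V : Type*) [AddCommGroup V]
    [Module ℝ V] [FiniteDimensional ℝ V] (hdim : Module.finrank ℝ V = 2 * n + 1)
    (α : V →ₗ[ℝ] ℝ) (ω : V →ₗ[ℝ] V →ₗ[ℝ] ℝ)
    (halt : ∀ v : V, ω v v = 0)
    (hα : α ≠ 0)
    (hnondeg : ∀ v : V, α v = 0 → (∀ w : V, α w = 0 → ω v w = 0) → v = 0)
    (R : V) (hR1 : α R = 1) (hR2 : ∀ v : V, ω R v = 0)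
    (h : ℝ) (β : V →ₗ[ℝ] ℝ) :
    ∃! v : V, α v = h ∧ ∀ w : V, ω v w = β R * α w - β w := by
  have hskew : ∀ v w : V, ω v w = -ω w v := by
    intro v w
    have := halt (v + w)
    simp only [map_add, LinearMap.add_apply, halt] at this
    linarith
  -- the map T v = (α v) • α + ω v from V to its dual
  set T : V →ₗ[ℝ] (V →ₗ[ℝ] ℝ) := α.smulRight α + ω with hT
  have hTinj : Function.Injective T := by
    rw [← LinearMap.ker_eq_bot, Submodule.eq_bot_iff]
    intro v hv
    simp only [LinearMap.mem_ker] at hv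
    have hvR : α v = 0 := by
      have := congrArg (fun f : V →ₗ[ℝ] ℝ => f R) hv
      simp only [hT, LinearMap.add_apply, LinearMap.smulRight_apply,
        LinearMap.smul_apply, LinearMap.zero_apply, smul_eq_mul, hR1, mul_one] at this
      have h2 : ω v R = 0 := by rw [hskew, hR2, neg_zero]
      linarith
    refine hnondeg v hvR ?_
    intro w hw
    have := congrArg (fun f : V →ₗ[ℝ] ℝ => f w) hv
    simp only [hT, LinearMap.add_apply, LinearMap.smulRight_apply,
      LinearMap.smul_apply, LinearMap.zero_apply, smul_eq_mul, hvR, zero_mul] at this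
    linarith
  have hTsurj : Function.Surjective T := by
    have := (LinearMap.injective_iff_surjective_of_finrank_eq_finrank
      (f := T) (by rw [Subspace.dual_finrank_eq])).mp hTinj
    exact this
  obtain ⟨v, hv⟩ := hTsurj (h • α + (β R • α - β))
  have hvR : α v = h := by
    have := congrArg (fun f : V →ₗ[ℝ] ℝ => f R) hv
    simp only [hT, LinearMap.add_apply, LinearMap.smulRight_apply, LinearMap.sub_apply,
      LinearMap.smul_apply, smul_eq_mul, hR1, mul_one] at this
    have h2 : ω v R = 0 := by rw [hskew, hR2, neg_zero]
    linarith
  refine ⟨v, ⟨hvR, ?_⟩, ?_⟩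
  · intro w
    have := congrArg (fun f : V →ₗ[ℝ] ℝ => f w) hv
    simp only [hT, LinearMap.add_apply, LinearMap.smulRight_apply, LinearMap.sub_apply,
      LinearMap.smul_apply, smul_eq_mul, hvR] at this
    linarith
  · rintro v' ⟨hv'1, hv'2⟩
    have key : ∀ w : V, ω v w = β R * α w - β w := by
      intro w
      have := congrArg (fun f : V →ₗ[ℝ] ℝ => f w) hv
      simp only [hT, LinearMap.add_apply, LinearMap.smulRight_apply, LinearMap.sub_apply,
        LinearMap.smul_apply, smul_eq_mul, hvR] at this
      linarith
    have hd : v' - v = 0 := by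
      refine hnondeg (v' - v) (by simp [hv'1, hvR]) ?_
      intro w _
      have := hv'2 w
      have := key w
      simp only [map_sub, LinearMap.sub_apply]
      linarith
    have := sub_eq_zero.mp hd
    exact this
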